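/- Let p = 2. Define u1(x) = (2/3)x for 0 ≤ x ≤ 1/2 and u1(x) = (4/3)x - 1/3 for 1/2 ≤ x ≤ 1; define u2(x) = (5/6)x for 0 ≤ x ≤ 4/5 and u2(x) = (5/3)x - 2/3 for 4/5 ≤ x ≤ 1. Let u = min(u1, u2). Then ∫₀¹ (u'(x))² dx = 7/6, while the linear function v(x) = x with the same boundary values has ∫₀¹ (v')² dx = 1. In particular u is not a Q-quasisuperminimizer in (0,1) for any Q < 7/6. -/

import Mathlib

open MeasureTheory Set

lemma deriv_on_Ioo' {u : ℝ → ℝ} {a b m c : ℝ}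
    (h : ∀ x ∈ Set.Ioo a b, u x = m * x + c) {x : ℝ} (hx : x ∈ Set.Ioo a b) :
    deriv u x = m := by
  have h1 : deriv u x = deriv (fun x => m * x + c) x := by
    apply Filter.EventuallyEq.deriv_eq
    exact Filter.eventuallyEq_of_mem (isOpen_Ioo.mem_nhds hx) h
  have h2 : HasDerivAt (fun x : ℝ => m * x + c) m x := by
    simpa using ((hasDerivAt_id x).const_mul m).add_const c
  rw [h1, h2.deriv]

lemma ae_eq_const' {u : ℝ → ℝ} {a b m c : ℝ}
    (h : ∀ x ∈ Set.Ioo a b, u x = m * x + c) :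
    (fun x => (deriv u x) ^ 2) =ᵐ[volume.restrict (Set.Ioc a b)]
      (fun _ => m ^ 2) := by
  rw [Measure.restrict_congr_set Ioo_ae_eq_Ioc.symm]
  filter_upwards [ae_restrict_mem measurableSet_Ioo] with x hx
  rw [deriv_on_Ioo' h hx]

lemma piece_integrable' {u : ℝ → ℝ} {a b m c : ℝ} (hab : a ≤ b)
    (h : ∀ x ∈ Set.Ioo a b, u x = m * x + c) :
    IntervalIntegrable (fun x => (deriv u x) ^ 2) volume a b := by
  rw [intervalIntegrable_iff, uIoc_of_le hab]
  exact (integrable_const _).congr (ae_eq_const' h).symm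

lemma piece_integral' {u : ℝ → ℝ} {a b m c : ℝ} (hab : a ≤ b)
    (h : ∀ x ∈ Set.Ioo a b, u x = m * x + c) :
    (∫ x in a..b, (deriv u x) ^ 2) = m ^ 2 * (b - a) := by
  rw [intervalIntegral.integral_of_le hab, integral_congr_ae (ae_eq_const' h),
    setIntegral_const, measureReal_def, Real.volume_Ioc, smul_eq_mul, ENNReal.toReal_ofReal (by linarith),
    mul_comm]

theorem stmt_8
    (u1 u2 u : ℝ → ℝ)
    (hu1 : ∀ x, u1 x = max ((2/3) * x) ((4/3) * x - 1/3))
    (hu2 : ∀ x, u2 x = max ((5/6) * x) ((5/3) * x - 2/3))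
    (hu : ∀ x, u x = min (u1 x) (u2 x)) :
    (∫ x in (0:ℝ)..1, (deriv u x) ^ 2) = 7/6 ∧
    (∫ x in (0:ℝ)..1, (deriv (fun y : ℝ => y) x) ^ 2) = 1 ∧
    ∀ Q : ℝ, Q < 7/6 →
      ¬ ((∫ x in (0:ℝ)..1, (deriv u x) ^ 2) ≤
          Q * ∫ x in (0:ℝ)..1, (deriv (fun y : ℝ => y) x) ^ 2) := by
  have h1 : ∀ x ∈ Set.Ioo (0:ℝ) (1/2), u x = (2/3) * x + 0 := by
    intro x ⟨ha, hb⟩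
    rw [hu, hu1, hu2, max_eq_left (by linarith), max_eq_left (by linarith),
      min_eq_left (by linarith)]
    ring
  have h2 : ∀ x ∈ Set.Ioo (1/2:ℝ) (2/3), u x = (4/3) * x + (-1/3) := by
    intro x ⟨ha, hb⟩
    rw [hu, hu1, hu2, max_eq_right (by linarith), max_eq_left (by linarith),
      min_eq_left (by linarith)]
    ring
  have h3 : ∀ x ∈ Set.Ioo (2/3:ℝ) (4/5), u x = (5/6) * x + 0 := by
    intro x ⟨ha, hb⟩
    rw [hu, hu1, hu2, max_eq_right (by linarith), max_eq_left (by linarith),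
      min_eq_right (by linarith)]
    ring
  have h4 : ∀ x ∈ Set.Ioo (4/5:ℝ) 1, u x = (5/3) * x + (-2/3) := by
    intro x ⟨ha, hb⟩
    rw [hu, hu1, hu2, max_eq_right (by linarith), max_eq_right (by linarith),
      min_eq_right (by linarith)]
    ring
  have i1 := piece_integrable' (by norm_num) h1
  have i2 := piece_integrable' (by norm_num) h2
  have i3 := piece_integrable' (by norm_num) h3
  have i4 := piece_integrable' (by norm_num) h4
  have split : (∫ x in (0:ℝ)..1, (deriv u x) ^ 2) =
      (∫ x in (0:ℝ)..(1/2), (deriv u x) ^ 2) +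
      (∫ x in (1/2:ℝ)..(2/3), (deriv u x) ^ 2) +
      (∫ x in (2/3:ℝ)..(4/5), (deriv u x) ^ 2) +
      (∫ x in (4/5:ℝ)..1, (deriv u x) ^ 2) := by
    rw [← intervalIntegral.integral_add_adjacent_intervals (i1.trans i2) (i3.trans i4),
      ← intervalIntegral.integral_add_adjacent_intervals i1 i2,
      ← intervalIntegral.integral_add_adjacent_intervals i3 i4]
    ring
  have key : (∫ x in (0:ℝ)..1, (deriv u x) ^ 2) = 7/6 := by
    rw [split, piece_integral' (by norm_num) h1, piece_integral' (by norm_num) h2,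
      piece_integral' (by norm_num) h3, piece_integral' (by norm_num) h4]
    norm_num
  have key2 : (∫ x in (0:ℝ)..1, (deriv (fun y : ℝ => y) x) ^ 2) = 1 := by
    have : (∫ x in (0:ℝ)..1, (deriv (fun y : ℝ => y) x) ^ 2) =
        ∫ x in (0:ℝ)..1, (1:ℝ) := by
      apply intervalIntegral.integral_congr
      intro x _
      simp [deriv_id'']
    rw [this]
    simp
  refine ⟨key, key2, ?_⟩
  intro Q hQ hle
  rw [key, key2, mul_one] at hle
  linarith
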